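/- Under the main setting, let m ∈ ℕ and suppose that ∏_{i=1}^r α_i^{β_i} ≠ 1 for every multi-index β ∈ ℕ^r with β_1 + ⋯ + β_r = m. Then the complex number ∑_{β ∈ ℕ^r, β_1+⋯+β_r = m} (m!/(β_1!⋯β_r!)) · (∏_{i=1}^r λ_i^{β_i}) · (∏_{i=1}^r α_i^{β_i}) / (1 − ∏_{i=1}^r α_i^{β_i}) is a rational number (it lies in the image of ℚ in ℂ). In particular, the value of the meromorphic continuation of ∑ a(n)^{−s} at s = −m, when −m is not a pole, is rational. -/

import Mathlib

open Polynomial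

/-- For `Q ∈ ℤ[X]`, `Q(∇)a(n) = ∑_j (coeff of X^j in Q) · a(n+j)`; this predicate says that
`Q(∇)a(n) = 0` for all `n ≥ 1`, i.e. `Q` annihilates the sequence `a`. -/
def Annihilates (Q : Polynomial ℤ) (a : ℕ → ℤ) : Prop :=
  ∀ n : ℕ, 1 ≤ n → (Q.sum fun j c => c * a (n + j)) = 0

private lemma vdm_exists_unique {F : Type*} [Field F] {r : ℕ} (v : Fin r → F)
    (hv : Function.Injective v) (h0 : ∀ i, v i ≠ 0) (w : Fin r → F) :
    ∃! x : Fin r → F, ∀ n : Fin r, ∑ i, v i ^ ((n : ℕ) + 1) * x i = w n := by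
  classical
  set M : Matrix (Fin r) (Fin r) F := Matrix.of fun n i => v i ^ ((n : ℕ) + 1) with hM
  have hMT : M.transpose = Matrix.diagonal v * Matrix.vandermonde v := by
    ext i n
    simp [hM, Matrix.mul_apply, Matrix.vandermonde, Matrix.diagonal, Finset.sum_ite_eq,
      pow_succ, mul_comm]
  have hdet : M.det ≠ 0 := by
    rw [← Matrix.det_transpose, hMT, Matrix.det_mul, Matrix.det_diagonal,
      Matrix.det_vandermonde]
    refine mul_ne_zero (Finset.prod_ne_zero_iff.2 fun i _ => h0 i) ?_
    refine Finset.prod_ne_zero_iff.2 fun i _ => Finset.prod_ne_zero_iff.2 fun j hj => ?_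
    refine sub_ne_zero.2 fun h => ?_
    exact absurd (hv h.symm) (by rintro rfl; exact lt_irrefl i (Finset.mem_Ioi.mp hj))
  have hunit : IsUnit M := (Matrix.isUnit_iff_isUnit_det M).2 (isUnit_iff_ne_zero.2 hdet)
  have hinj : Function.Injective M.mulVec := Matrix.mulVec_injective_iff_isUnit.2 hunit
  have hsys : ∀ x : Fin r → F, (∀ n : Fin r, ∑ i, v i ^ ((n : ℕ) + 1) * x i = w n) ↔ M.mulVec x = w := by
    intro x
    constructor
    · intro h; funext n; simpa [Matrix.mulVec, dotProduct, hM] using h n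
    · intro h n; have := congrFun h n; simpa [Matrix.mulVec, dotProduct, hM] using this
  refine ⟨M⁻¹.mulVec w, (hsys _).2 ?_, ?_⟩
  · rw [Matrix.mulVec_mulVec, Matrix.mul_nonsing_inv _ (isUnit_iff_ne_zero.2 hdet),
      Matrix.one_mulVec]
  · intro y hy
    apply hinj
    rw [(hsys y).1 hy, Matrix.mulVec_mulVec, Matrix.mul_nonsing_inv _ (isUnit_iff_ne_zero.2 hdet),
      Matrix.one_mulVec]

/-- Under the main setting, if `α^β ≠ 1` for every multi-index `β` with `|β| = m`, then the
multinomial sum `∑_{|β| = m} (m!/(β₁!⋯β_r!)) · λ^β · α^β / (1 - α^β)` — the value at `s = -m`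
of the meromorphic continuation of `∑_{n≥1} a(n)^{-s}` when `-m` is not a pole — is a rational
number. -/
theorem value_at_negative_integer_rational
    (a : ℕ → ℤ) (r : ℕ) (hr : 1 ≤ r)
    (P : Polynomial ℤ) (hmonic : P.Monic)
    (hmin : ∀ Q : Polynomial ℤ, Annihilates Q a ↔ P ∣ Q)
    (hirr : Irreducible (P.map (Int.castRingHom ℚ)))
    (hdeg : P.natDegree = r)
    (α : ℕ → ℂ)
    (hroot : ∀ i, i < r → (Polynomial.aeval (α i)) P = 0)
    (hinj : Set.InjOn α (Set.Iio r))
    (α₁ : ℝ) (hα₁ : α 0 = (α₁ : ℂ)) (hα₁gt : 1 < α₁)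
    (hdom : ∀ i, 1 ≤ i → i < r → ‖α i‖ < α₁)
    (lam : ℕ → ℂ) (hlam : ∀ i, i < r → lam i ≠ 0)
    (l₁ : ℝ) (hl₁ : lam 0 = (l₁ : ℂ)) (hl₁pos : 0 < l₁)
    (hbinet : ∀ n : ℕ, 1 ≤ n → (a n : ℂ) = ∑ i ∈ Finset.range r, lam i * α i ^ n)
    (hmono : ∀ n : ℕ, 1 ≤ n → a n < a (n + 1))
    (hpos : ∀ n : ℕ, 1 ≤ n → 1 ≤ a n)
    (m : ℕ)
    (hnotpole : ∀ β : Fin r → ℕ, (∑ i, β i) = m → (∏ i : Fin r, α (i : ℕ) ^ β i) ≠ 1) :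
    ∃ q : ℚ,
      (∑ β ∈ Finset.Nat.antidiagonalTuple r m,
        ((Nat.factorial m : ℂ) / ∏ i : Fin r, (Nat.factorial (β i) : ℂ)) *
          (∏ i : Fin r, lam (i : ℕ) ^ β i) *
          (∏ i : Fin r, α (i : ℕ) ^ β i) / (1 - ∏ i : Fin r, α (i : ℕ) ^ β i)) = (q : ℂ) := by
  classical
  set p : Polynomial ℚ := P.map (Int.castRingHom ℚ) with hpdef
  have hpmonic : p.Monic := hmonic.map _
  have hp0 : p ≠ 0 := hpmonic.ne_zero
  have hpdeg : p.natDegree = r := by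
    rw [hpdef, hmonic.natDegree_map, hdeg]
  -- roots of p in ℂ
  have hrootp : ∀ i : Fin r, aeval (α (i : ℕ)) p = 0 := by
    intro i
    rw [hpdef, ← algebraMap_int_eq, aeval_map_algebraMap]
    exact hroot i i.2
  -- none of the roots is zero
  have hαne : ∀ i : Fin r, α (i : ℕ) ≠ 0 := by
    intro i h
    have hc : p.coeff 0 = 0 := by
      have := hrootp i
      rw [h] at this
      simpa [aeval_def, eval₂_at_zero] using this
    have hXdvd : X ∣ p := X_dvd_iff.2 hc
    obtain ⟨d, hd⟩ := hXdvd
    rcases hirr.isUnit_or_isUnit hd with hX | hdu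
    · exact Polynomial.not_isUnit_X hX
    · have : p.natDegree = 1 := by
        rw [hd, natDegree_mul X_ne_zero (fun hd0 => by simp [hd0] at hd; exact hp0 hd),
          natDegree_X, Polynomial.natDegree_eq_zero_of_isUnit hdu]
      have hr1 : r = 1 := by omega
      have hi0 : (i : ℕ) = 0 := by omega
      rw [hi0, hα₁] at h
      exact absurd (by exact_mod_cast h : α₁ = 0) (by linarith)
  -- the splitting field
  have hsplits : (p.map (algebraMap ℚ ℂ)).Splits := IsAlgClosed.splits _
  set K : IntermediateField ℚ ℂ := IntermediateField.adjoin ℚ (p.rootSet ℂ) with hKdef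
  have hmem : ∀ i : Fin r, α (i : ℕ) ∈ K := by
    intro i
    exact IntermediateField.subset_adjoin _ _ (Polynomial.mem_rootSet.2 ⟨hp0, hrootp i⟩)
  haveI hsf : p.IsSplittingField ℚ K := IntermediateField.adjoin_rootSet_isSplittingField hsplits
  haveI : FiniteDimensional ℚ K := Polynomial.IsSplittingField.finiteDimensional K p
  haveI : IsGalois ℚ K := IsGalois.of_separable_splitting_field hirr.separable
  set φ : K →+* ℂ := (algebraMap K ℂ) with hφdef
  have hφinj : Function.Injective φ := φ.injective
  set α' : Fin r → K := fun i => ⟨α (i : ℕ), hmem i⟩ with hα'def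
  have hφα : ∀ i, φ (α' i) = α (i : ℕ) := fun i => rfl
  have hα'inj : Function.Injective α' := by
    intro i j h
    have : α (i : ℕ) = α (j : ℕ) := congrArg φ h
    exact Fin.ext (hinj i.2 j.2 this)
  have hα'ne : ∀ i, α' i ≠ 0 := by
    intro i h
    exact hαne i (by rw [← hφα i, h, map_zero])
    -- roots of p inside K
  have haeval' : ∀ i, aeval (α' i) p = 0 := by
    intro i
    apply hφinj
    rw [map_zero, hφdef, ← Polynomial.aeval_algebraMap_apply]
    exact hrootp i
  have hrootsK : (Finset.univ.image α') = (p.map (algebraMap ℚ K)).roots.toFinset := by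
    apply Finset.eq_of_subset_of_card_le
    · intro x hx
      obtain ⟨i, _, rfl⟩ := Finset.mem_image.mp hx
      rw [Multiset.mem_toFinset, Polynomial.mem_roots']
      · exact ⟨by simp [Polynomial.Monic.ne_zero (hpmonic.map _)],
          by rw [Polynomial.IsRoot, Polynomial.eval_map, ← Polynomial.aeval_def]; exact haeval' i⟩
    · calc (p.map (algebraMap ℚ K)).roots.toFinset.card
          ≤ Multiset.card (p.map (algebraMap ℚ K)).roots := Multiset.toFinset_card_le _
        _ ≤ (p.map (algebraMap ℚ K)).natDegree := Polynomial.card_roots' _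
        _ = r := by rw [(hpmonic.natDegree_map _ : (p.map (algebraMap ℚ K)).natDegree = p.natDegree), hpdeg]
        _ = (Finset.univ.image α').card := by
            rw [Finset.card_image_of_injective _ hα'inj, Finset.card_univ, Fintype.card_fin]
  have hrootmem : ∀ x : K, aeval x p = 0 → ∃ i, α' i = x := by
    intro x hx
    have : x ∈ (p.map (algebraMap ℚ K)).roots.toFinset := by
      rw [Multiset.mem_toFinset, Polynomial.mem_roots']
      exact ⟨by simp [Polynomial.Monic.ne_zero (hpmonic.map _)],
        by rw [Polynomial.IsRoot, Polynomial.eval_map, ← Polynomial.aeval_def]; exact hx⟩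
    rw [← hrootsK] at this
    obtain ⟨i, _, hi⟩ := Finset.mem_image.mp this
    exact ⟨i, hi⟩
  -- the lambda vector inside K
  set aK : Fin r → K := fun n => ((a ((n : ℕ) + 1) : ℤ) : K) with haKdef
  obtain ⟨lam', hlam'sys, hlam'uniq⟩ := vdm_exists_unique α' hα'inj hα'ne aK
  have hφlam : ∀ i, φ (lam' i) = lam (i : ℕ) := by
    obtain ⟨x, hxsys, hxuniq⟩ := vdm_exists_unique (fun i : Fin r => α (i : ℕ))
      (fun i j h => Fin.ext (hinj i.2 j.2 h)) hαne (fun n => ((a ((n : ℕ) + 1) : ℤ) : ℂ))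
    have h1 : (fun i => φ (lam' i)) = x := by
      apply hxuniq
      intro n
      have := congrArg φ (hlam'sys n)
      simpa [map_sum, map_mul, map_pow, hφα, haKdef, map_intCast] using this
    have h2 : (fun i : Fin r => lam (i : ℕ)) = x := by
      apply hxuniq
      intro n
      have hb := hbinet ((n : ℕ) + 1) (by omega)
      rw [Finset.sum_range] at hb
      rw [hb]
      exact Finset.sum_congr rfl fun i _ => (mul_comm _ _)
    intro i
    rw [congrFun h1 i, ← congrFun h2 i]
    -- denominators are nonzero in K
  have hden : ∀ β : Fin r → ℕ, (∑ i, β i) = m → (1 - ∏ i, α' i ^ β i) ≠ 0 := by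
    intro β hβ h
    apply hnotpole β hβ
    have := congrArg φ h
    rw [map_sub, map_one, map_prod, map_zero] at this
    simp only [map_pow, hφα] at this
    linear_combination -this
  -- the candidate sum, inside K
  set term : (Fin r → ℕ) → K := fun γ =>
    ((Nat.factorial m : K) / ∏ i : Fin r, (Nat.factorial (γ i) : K)) *
      (∏ i : Fin r, lam' i ^ γ i) *
      (∏ i : Fin r, α' i ^ γ i) / (1 - ∏ i : Fin r, α' i ^ γ i) with htermdef
  set S : K := ∑ β ∈ Finset.Nat.antidiagonalTuple r m, term β with hSdef
  -- S is fixed by the Galois group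
  have hfix : ∀ σ : K ≃ₐ[ℚ] K, σ S = S := by
    intro σ
    -- σ permutes the roots
    have hσroot : ∀ i : Fin r, ∃ j : Fin r, α' j = σ (α' i) := by
      intro i
      apply hrootmem
      have h0 := Polynomial.aeval_algHom_apply (σ : K →ₐ[ℚ] K) (α' i) p
      rw [haeval' i, map_zero] at h0
      simpa using h0
    set πf : Fin r → Fin r := fun i => (hσroot i).choose with hπfdef
    have hπf : ∀ i, α' (πf i) = σ (α' i) := fun i => (hσroot i).choose_spec
    have hπfinj : Function.Injective πf := by
      intro i j h
      apply hα'inj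
      apply σ.injective
      rw [← hπf i, ← hπf j, h]
    set π : Fin r ≃ Fin r := Equiv.ofBijective πf (Finite.injective_iff_bijective.mp hπfinj)
      with hπdef
    have hπ : ∀ i, α' (π i) = σ (α' i) := hπf
    -- σ permutes the lambdas accordingly
    have hσlam : ∀ i, σ (lam' i) = lam' (π i) := by
      have hy : (fun j => σ (lam' (π.symm j))) = lam' := by
        apply hlam'uniq
        intro n
        have h1 := congrArg σ (hlam'sys n)
        rw [map_sum] at h1
        simp only [map_mul, map_pow, hπ] at h1 ⊢
        calc ∑ j : Fin r, α' j ^ ((n : ℕ) + 1) * σ (lam' (π.symm j))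
            = ∑ i : Fin r, α' (π i) ^ ((n : ℕ) + 1) * σ (lam' (π.symm (π i))) :=
              (Equiv.sum_comp π (fun j => α' j ^ ((n : ℕ) + 1) * σ (lam' (π.symm j)))).symm
          _ = ∑ i : Fin r, σ (α' i) ^ ((n : ℕ) + 1) * σ (lam' i) := by
              refine Finset.sum_congr rfl fun i _ => ?_
              rw [Equiv.symm_apply_apply, hπ]
          _ = aK n := by
              rw [h1, haKdef]
              simp
      intro i
      have := congrFun hy (π i)
      rwa [Equiv.symm_apply_apply] at this
    -- reindexing products along π
    have hreidx : ∀ (f : Fin r → K) (β : Fin r → ℕ),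
        ∏ i : Fin r, f (π i) ^ β i = ∏ j : Fin r, f j ^ β (π.symm j) := by
      intro f β
      rw [← Equiv.prod_comp π (fun j => f j ^ β (π.symm j))]
      exact Finset.prod_congr rfl fun i _ => by rw [Equiv.symm_apply_apply]
    have hσterm : ∀ β : Fin r → ℕ, σ (term β) = term (β ∘ π.symm) := by
      intro β
      have hfac : ∏ i : Fin r, ((Nat.factorial (β (π.symm i)) : K)) =
          ∏ i : Fin r, ((Nat.factorial (β i) : K)) :=
        Equiv.prod_comp π.symm (fun j => ((Nat.factorial (β j) : K)))
      rw [htermdef]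
      simp only [map_div₀, map_mul, map_sub, map_one, map_prod, map_pow, map_natCast, hσlam,
        Function.comp_apply]
      simp only [← hπ]
      rw [hreidx lam' β, hreidx α' β, hfac]
    rw [hSdef, map_sum]
    calc ∑ β ∈ Finset.Nat.antidiagonalTuple r m, σ (term β)
        = ∑ β ∈ Finset.Nat.antidiagonalTuple r m, term (β ∘ π.symm) :=
          Finset.sum_congr rfl fun β _ => hσterm β
      _ = ∑ β ∈ Finset.Nat.antidiagonalTuple r m, term β := by
          refine Finset.sum_nbij' (fun β => β ∘ π.symm) (fun γ => γ ∘ π) ?_ ?_ ?_ ?_ ?_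
          · intro β hβ
            rw [Finset.Nat.mem_antidiagonalTuple] at hβ ⊢
            rw [← hβ]
            exact Equiv.sum_comp π.symm β
          · intro γ hγ
            rw [Finset.Nat.mem_antidiagonalTuple] at hγ ⊢
            rw [← hγ]
            exact Equiv.sum_comp π γ
          · intro β _; funext i; simp
          · intro γ _; funext i; simp
          · intro β _; rfl
    -- fixed elements are rational
  have hSbot : S ∈ (⊥ : IntermediateField ℚ K) := by
    rw [← IsGalois.fixedField_fixingSubgroup (⊥ : IntermediateField ℚ K),
      IntermediateField.fixingSubgroup_bot]
    exact fun σ => hfix σ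
  obtain ⟨q, hq⟩ := IntermediateField.mem_bot.mp hSbot
  refine ⟨q, ?_⟩
  have h1 : (q : ℂ) = φ S := by
    rw [← hq, hφdef, ← IsScalarTower.algebraMap_apply ℚ K ℂ q]
    simp
  rw [h1, hSdef, map_sum]
  refine Finset.sum_congr rfl fun β hβ => ?_
  rw [htermdef]
  simp only [map_div₀, map_mul, map_sub, map_one, map_prod, map_pow, map_natCast, hφα, hφlam]
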